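/- Let M ∈ SU(2,1) (for the Hermitian form z₁conj(w₃)+z₂conj(w₂)+z₃conj(w₁)) send ∞ to a boundary point with normalized lift p̃₀ = (w₀₁,w₀₂,1), send 0 to a point with lift p̃₁ = (w₁₁,w₁₂,1), and send (1,t) to a point with lift p̃₂ = (w₂₁,w₂₂,1). Let K be the field generated over ℚ by it and all wⱼₖ and their conjugates. Then all entries of M³ lie in K. -/

import Mathlib

open Matrix Complex

/-- The standard Hermitian form of signature (2,1) (Siegel model). -/
noncomputable def Jform : Matrix (Fin 3) (Fin 3) ℂ := !![0,0,1;0,1,0;1,0,0]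

/-- Membership in SU(2,1). -/
def inSU21 (g : Matrix (Fin 3) (Fin 3) ℂ) : Prop :=
  gᴴ * Jform * g = Jform ∧ g.det = 1

theorem cube_in_coordinate_field
    (M : Matrix (Fin 3) (Fin 3) ℂ) (hM : inSU21 M)
    (t : ℝ) (w₀₁ w₀₂ w₁₁ w₁₂ w₂₁ w₂₂ : ℂ)
    -- M sends ∞ (lift (1,0,0)) to p₀, 0 (lift (0,0,1)) to p₁,
    -- and (1,t) (lift ((-1+it)/2, 1, 1)) to p₂
    (h0 : ∃ a : ℂ, a ≠ 0 ∧ M.mulVec ![1, 0, 0] = a • ![w₀₁, w₀₂, 1])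
    (h1 : ∃ a : ℂ, a ≠ 0 ∧ M.mulVec ![0, 0, 1] = a • ![w₁₁, w₁₂, 1])
    (h2 : ∃ a : ℂ, a ≠ 0 ∧
      M.mulVec ![(-1 + t * I)/2, 1, 1] = a • ![w₂₁, w₂₂, 1]) :
    ∀ i j, (M ^ 3) i j ∈ Subfield.closure
      ({(t : ℂ) * I, w₀₁, w₀₂, w₁₁, w₁₂, w₂₁, w₂₂,
        (starRingEnd ℂ) w₀₁, (starRingEnd ℂ) w₀₂, (starRingEnd ℂ) w₁₁,
        (starRingEnd ℂ) w₁₂, (starRingEnd ℂ) w₂₁, (starRingEnd ℂ) w₂₂} : Set ℂ) := by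
  obtain ⟨hJ, hdet⟩ := hM
  obtain ⟨a₀, ha₀, h₀⟩ := h0
  obtain ⟨a₁, ha₁, h₁⟩ := h1
  obtain ⟨a₂, ha₂, h₂⟩ := h2
  set μ : ℂ := (-1 + (t:ℂ) * I)/2 with hμdef
  -- entries of M
  have E00 : M 0 0 = a₀ * w₀₁ := by
    simpa [Matrix.mulVec, dotProduct, Fin.sum_univ_three] using congrFun h₀ 0
  have E10 : M 1 0 = a₀ * w₀₂ := by
    simpa [Matrix.mulVec, dotProduct, Fin.sum_univ_three] using congrFun h₀ 1
  have E20 : M 2 0 = a₀ := by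
    simpa [Matrix.mulVec, dotProduct, Fin.sum_univ_three] using congrFun h₀ 2
  have E02 : M 0 2 = a₁ * w₁₁ := by
    simpa [Matrix.mulVec, dotProduct, Fin.sum_univ_three] using congrFun h₁ 0
  have E12 : M 1 2 = a₁ * w₁₂ := by
    simpa [Matrix.mulVec, dotProduct, Fin.sum_univ_three] using congrFun h₁ 1
  have E22 : M 2 2 = a₁ := by
    simpa [Matrix.mulVec, dotProduct, Fin.sum_univ_three] using congrFun h₁ 2
  have E01 : M 0 1 = a₂ * w₂₁ - μ * (a₀ * w₀₁) - a₁ * w₁₁ := by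
    have h := congrFun h₂ 0
    simp [Matrix.mulVec, dotProduct, Fin.sum_univ_three, ← hμdef] at h
    rw [E00, E02] at h; linear_combination h
  have E11 : M 1 1 = a₂ * w₂₂ - μ * (a₀ * w₀₂) - a₁ * w₁₂ := by
    have h := congrFun h₂ 1
    simp [Matrix.mulVec, dotProduct, Fin.sum_univ_three, ← hμdef] at h
    rw [E10, E12] at h; linear_combination h
  have E21 : M 2 1 = a₂ - μ * a₀ - a₁ := by
    have h := congrFun h₂ 2
    simp [Matrix.mulVec, dotProduct, Fin.sum_univ_three, ← hμdef] at h
    rw [E20, E22] at h; linear_combination h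
  -- hermitian form relations
  set α : ℂ := w₀₁ + w₀₂ * (starRingEnd ℂ) w₁₂ + (starRingEnd ℂ) w₁₁ with hαdef
  set β : ℂ := w₂₁ + w₂₂ * (starRingEnd ℂ) w₀₂ + (starRingEnd ℂ) w₀₁ with hβdef
  set γ : ℂ := w₂₁ + w₂₂ * (starRingEnd ℂ) w₁₂ + (starRingEnd ℂ) w₁₁ with hγdef
  set D : ℂ := w₀₁*(w₂₂ - w₁₂) - w₂₁*(w₀₂ - w₁₂) + w₁₁*(w₀₂ - w₂₂) with hDdef
  have J00 := congrFun (congrFun hJ 0) 0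
  have J01 := congrFun (congrFun hJ 0) 1
  have J02 := congrFun (congrFun hJ 0) 2
  have J20 := congrFun (congrFun hJ 2) 0
  have J21 := congrFun (congrFun hJ 2) 1
  have J22 := congrFun (congrFun hJ 2) 2
  simp only [Matrix.mul_apply, Matrix.conjTranspose_apply, Jform, Fin.sum_univ_three,
    Complex.star_def, Matrix.cons_val', Matrix.cons_val_zero, Matrix.cons_val_one,
    Matrix.head_cons, Matrix.empty_val', Matrix.cons_val_fin_one, Matrix.head_fin_const,
    Matrix.cons_val_two, Matrix.tail_cons, Matrix.of_apply, Matrix.head_fin_const] at J00 J01 J02 J20 J21 J22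
  simp only [E00, E01, E02, E10, E11, E12, E20, E21, E22] at J00 J01 J02 J20 J21 J22
  simp only [_root_.map_mul, _root_.map_sub, _root_.map_add] at J00 J01 J02 J20 J21 J22
  have R1 : a₀ * (starRingEnd ℂ) a₁ * α = 1 := by
    rw [hαdef]; linear_combination J20
  have R2 : a₂ * (starRingEnd ℂ) a₀ * β = 1 := by
    rw [hβdef]; linear_combination J01 + μ * J00 + J02
  have R3 : a₂ * (starRingEnd ℂ) a₁ * γ = μ := by
    rw [hγdef]; linear_combination J21 + μ * J20 + J22
  rw [Matrix.det_fin_three, E00, E01, E02, E10, E11, E12, E20, E21, E22] at hdet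
  have R4 : a₀ * a₁ * a₂ * D = 1 := by
    rw [hDdef]; linear_combination hdet
  -- nonvanishing
  have hμ0 : μ ≠ 0 := by
    rw [hμdef, div_ne_zero_iff]
    constructor
    · intro h
      have := congrArg Complex.re h
      simp at this
    · norm_num
  have hca₀ : (starRingEnd ℂ) a₀ ≠ 0 := by simpa using ha₀
  have hca₁ : (starRingEnd ℂ) a₁ ≠ 0 := by simpa using ha₁
  have hα0 : α ≠ 0 := by intro h; rw [h, mul_zero] at R1; exact one_ne_zero R1.symm
  have hβ0 : β ≠ 0 := by intro h; rw [h, mul_zero] at R2; exact one_ne_zero R2.symm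
  have hγ0 : γ ≠ 0 := by intro h; rw [h, mul_zero] at R3; exact hμ0 R3.symm
  have hD0 : D ≠ 0 := by intro h; rw [h, mul_zero] at R4; exact one_ne_zero R4.symm
  have hcα0 : (starRingEnd ℂ) α ≠ 0 := by simpa using hα0
  -- key relations
  have conjR1 : (starRingEnd ℂ) a₀ * a₁ * (starRingEnd ℂ) α = 1 := by
    have h := congrArg (starRingEnd ℂ) R1
    simpa [_root_.map_mul, mul_comm, mul_assoc, mul_left_comm] using h
  have key1 : a₀ * (α * μ) = a₂ * γ := by
    have h : (starRingEnd ℂ) a₁ * (a₀ * (α * μ) - a₂ * γ) = 0 := by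
      linear_combination μ * R1 - R3
    rcases mul_eq_zero.mp h with h' | h'
    · exact absurd h' hca₁
    · exact sub_eq_zero.mp h'
  have key2 : a₁ * (starRingEnd ℂ) α = a₂ * β := by
    have h : (starRingEnd ℂ) a₀ * (a₁ * (starRingEnd ℂ) α - a₂ * β) = 0 := by
      linear_combination conjR1 - R2
    rcases mul_eq_zero.mp h with h' | h'
    · exact absurd h' hca₀
    · exact sub_eq_zero.mp h'
  set r : ℂ := γ / (α * μ) with hrdef
  set s : ℂ := β / (starRingEnd ℂ) α with hsdef
  have ea₀ : a₀ = a₂ * r := by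
    rw [hrdef, mul_div_assoc']
    rw [eq_div_iff (mul_ne_zero hα0 hμ0)]
    linear_combination key1
  have ea₁ : a₁ = a₂ * s := by
    rw [hsdef, mul_div_assoc']
    rw [eq_div_iff hcα0]
    linear_combination key2
  have a₂cube : a₂ ^ 3 = α * μ * (starRingEnd ℂ) α / (γ * β * D) := by
    rw [eq_div_iff (mul_ne_zero (mul_ne_zero hγ0 hβ0) hD0)]
    linear_combination (-(a₂^2*β*D))*key1 - (a₀*α*μ*a₂*D)*key2 + (α*μ*((starRingEnd ℂ) α))*R4
  clear_value r s
  set N : Matrix (Fin 3) (Fin 3) ℂ :=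
    !![r*w₀₁, w₂₁ - μ*(r*w₀₁) - s*w₁₁, s*w₁₁;
       r*w₀₂, w₂₂ - μ*(r*w₀₂) - s*w₁₂, s*w₁₂;
       r,     1 - μ*r - s,             s] with hNdef
  have hMNe : ∀ p q, M p q = a₂ * N p q := by
    intro p q
    fin_cases p <;> fin_cases q
    · show M 0 0 = a₂ * N 0 0
      rw [hNdef]; simp only [Matrix.cons_val', Matrix.cons_val_zero, Matrix.cons_val_one, Matrix.head_cons, Matrix.empty_val', Matrix.cons_val_fin_one, Matrix.cons_val_two, Matrix.tail_cons, Matrix.of_apply, Matrix.head_fin_const]; rw [E00, ea₀]; ring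
    · show M 0 1 = a₂ * N 0 1
      rw [hNdef]; simp only [Matrix.cons_val', Matrix.cons_val_zero, Matrix.cons_val_one, Matrix.head_cons, Matrix.empty_val', Matrix.cons_val_fin_one, Matrix.cons_val_two, Matrix.tail_cons, Matrix.of_apply, Matrix.head_fin_const]; rw [E01, ea₀, ea₁]; ring
    · show M 0 2 = a₂ * N 0 2
      rw [hNdef]; simp only [Matrix.cons_val', Matrix.cons_val_zero, Matrix.cons_val_one, Matrix.head_cons, Matrix.empty_val', Matrix.cons_val_fin_one, Matrix.cons_val_two, Matrix.tail_cons, Matrix.of_apply, Matrix.head_fin_const]; rw [E02, ea₁]; ring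
    · show M 1 0 = a₂ * N 1 0
      rw [hNdef]; simp only [Matrix.cons_val', Matrix.cons_val_zero, Matrix.cons_val_one, Matrix.head_cons, Matrix.empty_val', Matrix.cons_val_fin_one, Matrix.cons_val_two, Matrix.tail_cons, Matrix.of_apply, Matrix.head_fin_const]; rw [E10, ea₀]; ring
    · show M 1 1 = a₂ * N 1 1
      rw [hNdef]; simp only [Matrix.cons_val', Matrix.cons_val_zero, Matrix.cons_val_one, Matrix.head_cons, Matrix.empty_val', Matrix.cons_val_fin_one, Matrix.cons_val_two, Matrix.tail_cons, Matrix.of_apply, Matrix.head_fin_const]; rw [E11, ea₀, ea₁]; ring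
    · show M 1 2 = a₂ * N 1 2
      rw [hNdef]; simp only [Matrix.cons_val', Matrix.cons_val_zero, Matrix.cons_val_one, Matrix.head_cons, Matrix.empty_val', Matrix.cons_val_fin_one, Matrix.cons_val_two, Matrix.tail_cons, Matrix.of_apply, Matrix.head_fin_const]; rw [E12, ea₁]; ring
    · show M 2 0 = a₂ * N 2 0
      rw [hNdef]; simp only [Matrix.cons_val', Matrix.cons_val_zero, Matrix.cons_val_one, Matrix.head_cons, Matrix.empty_val', Matrix.cons_val_fin_one, Matrix.cons_val_two, Matrix.tail_cons, Matrix.of_apply, Matrix.head_fin_const]; rw [E20, ea₀]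
    · show M 2 1 = a₂ * N 2 1
      rw [hNdef]; simp only [Matrix.cons_val', Matrix.cons_val_zero, Matrix.cons_val_one, Matrix.head_cons, Matrix.empty_val', Matrix.cons_val_fin_one, Matrix.cons_val_two, Matrix.tail_cons, Matrix.of_apply, Matrix.head_fin_const]; rw [E21, ea₀, ea₁]; ring
    · show M 2 2 = a₂ * N 2 2
      rw [hNdef]; simp only [Matrix.cons_val', Matrix.cons_val_zero, Matrix.cons_val_one, Matrix.head_cons, Matrix.empty_val', Matrix.cons_val_fin_one, Matrix.cons_val_two, Matrix.tail_cons, Matrix.of_apply, Matrix.head_fin_const]; rw [E22, ea₁]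
  have hMN : M = a₂ • N := by
    ext p q
    rw [Matrix.smul_apply, smul_eq_mul]
    exact hMNe p q
  intro i j
  set K := Subfield.closure
      ({(t : ℂ) * I, w₀₁, w₀₂, w₁₁, w₁₂, w₂₁, w₂₂,
        (starRingEnd ℂ) w₀₁, (starRingEnd ℂ) w₀₂, (starRingEnd ℂ) w₁₁,
        (starRingEnd ℂ) w₁₂, (starRingEnd ℂ) w₂₁, (starRingEnd ℂ) w₂₂} : Set ℂ) with hK
  have g1 : ((t:ℂ) * I) ∈ K := Subfield.subset_closure (by simp)
  have g2 : w₀₁ ∈ K := Subfield.subset_closure (by simp)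
  have g3 : w₀₂ ∈ K := Subfield.subset_closure (by simp)
  have g4 : w₁₁ ∈ K := Subfield.subset_closure (by simp)
  have g5 : w₁₂ ∈ K := Subfield.subset_closure (by simp)
  have g6 : w₂₁ ∈ K := Subfield.subset_closure (by simp)
  have g7 : w₂₂ ∈ K := Subfield.subset_closure (by simp)
  have g8 : (starRingEnd ℂ) w₀₁ ∈ K := Subfield.subset_closure (by simp)
  have g9 : (starRingEnd ℂ) w₀₂ ∈ K := Subfield.subset_closure (by simp)
  have g10 : (starRingEnd ℂ) w₁₁ ∈ K := Subfield.subset_closure (by simp)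
  have g11 : (starRingEnd ℂ) w₁₂ ∈ K := Subfield.subset_closure (by simp)
  have g12 : (starRingEnd ℂ) w₂₁ ∈ K := Subfield.subset_closure (by simp)
  have g13 : (starRingEnd ℂ) w₂₂ ∈ K := Subfield.subset_closure (by simp)
  have h2K : (2:ℂ) ∈ K := by
    have := K.add_mem K.one_mem K.one_mem
    norm_num at this
    rw [show (2:ℂ) = 1 + 1 by norm_num]; exact K.add_mem K.one_mem K.one_mem
  have hμK : μ ∈ K := by
    rw [hμdef]
    exact K.div_mem (K.add_mem (K.neg_mem K.one_mem) g1) h2K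
  have hαK : α ∈ K := by
    rw [hαdef]; exact K.add_mem (K.add_mem g2 (K.mul_mem g3 g11)) g10
  have hβK : β ∈ K := by
    rw [hβdef]; exact K.add_mem (K.add_mem g6 (K.mul_mem g7 g9)) g8
  have hγK : γ ∈ K := by
    rw [hγdef]; exact K.add_mem (K.add_mem g6 (K.mul_mem g7 g11)) g10
  have hDK : D ∈ K := by
    rw [hDdef]
    exact K.add_mem (K.sub_mem (K.mul_mem g2 (K.sub_mem g7 g5))
      (K.mul_mem g6 (K.sub_mem g3 g5))) (K.mul_mem g4 (K.sub_mem g3 g7))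
  have hcαK : (starRingEnd ℂ) α ∈ K := by
    rw [hαdef]
    simp only [_root_.map_add, _root_.map_mul, Complex.conj_conj]
    exact K.add_mem (K.add_mem g8 (K.mul_mem g9 g5)) g4
  have hrK : r ∈ K := by rw [hrdef]; exact K.div_mem hγK (K.mul_mem hαK hμK)
  have hsK : s ∈ K := by rw [hsdef]; exact K.div_mem hβK hcαK
  have ha₂3K : a₂ ^ 3 ∈ K := by
    rw [a₂cube]
    exact K.div_mem (K.mul_mem (K.mul_mem hαK hμK) hcαK)
      (K.mul_mem (K.mul_mem hγK hβK) hDK)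
  have hNK : ∀ p q, N p q ∈ K := by
    intro p q
    fin_cases p <;> fin_cases q
    · show N 0 0 ∈ K
      rw [hNdef]; simp only [Matrix.cons_val', Matrix.cons_val_zero, Matrix.cons_val_one, Matrix.head_cons, Matrix.empty_val', Matrix.cons_val_fin_one, Matrix.cons_val_two, Matrix.tail_cons, Matrix.of_apply, Matrix.head_fin_const]
      exact K.mul_mem hrK g2
    · show N 0 1 ∈ K
      rw [hNdef]; simp only [Matrix.cons_val', Matrix.cons_val_zero, Matrix.cons_val_one, Matrix.head_cons, Matrix.empty_val', Matrix.cons_val_fin_one, Matrix.cons_val_two, Matrix.tail_cons, Matrix.of_apply, Matrix.head_fin_const]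
      exact K.sub_mem (K.sub_mem g6 (K.mul_mem hμK (K.mul_mem hrK g2))) (K.mul_mem hsK g4)
    · show N 0 2 ∈ K
      rw [hNdef]; simp only [Matrix.cons_val', Matrix.cons_val_zero, Matrix.cons_val_one, Matrix.head_cons, Matrix.empty_val', Matrix.cons_val_fin_one, Matrix.cons_val_two, Matrix.tail_cons, Matrix.of_apply, Matrix.head_fin_const]
      exact K.mul_mem hsK g4
    · show N 1 0 ∈ K
      rw [hNdef]; simp only [Matrix.cons_val', Matrix.cons_val_zero, Matrix.cons_val_one, Matrix.head_cons, Matrix.empty_val', Matrix.cons_val_fin_one, Matrix.cons_val_two, Matrix.tail_cons, Matrix.of_apply, Matrix.head_fin_const]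
      exact K.mul_mem hrK g3
    · show N 1 1 ∈ K
      rw [hNdef]; simp only [Matrix.cons_val', Matrix.cons_val_zero, Matrix.cons_val_one, Matrix.head_cons, Matrix.empty_val', Matrix.cons_val_fin_one, Matrix.cons_val_two, Matrix.tail_cons, Matrix.of_apply, Matrix.head_fin_const]
      exact K.sub_mem (K.sub_mem g7 (K.mul_mem hμK (K.mul_mem hrK g3))) (K.mul_mem hsK g5)
    · show N 1 2 ∈ K
      rw [hNdef]; simp only [Matrix.cons_val', Matrix.cons_val_zero, Matrix.cons_val_one, Matrix.head_cons, Matrix.empty_val', Matrix.cons_val_fin_one, Matrix.cons_val_two, Matrix.tail_cons, Matrix.of_apply, Matrix.head_fin_const]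
      exact K.mul_mem hsK g5
    · show N 2 0 ∈ K
      rw [hNdef]; simp only [Matrix.cons_val', Matrix.cons_val_zero, Matrix.cons_val_one, Matrix.head_cons, Matrix.empty_val', Matrix.cons_val_fin_one, Matrix.cons_val_two, Matrix.tail_cons, Matrix.of_apply, Matrix.head_fin_const]
      exact hrK
    · show N 2 1 ∈ K
      rw [hNdef]; simp only [Matrix.cons_val', Matrix.cons_val_zero, Matrix.cons_val_one, Matrix.head_cons, Matrix.empty_val', Matrix.cons_val_fin_one, Matrix.cons_val_two, Matrix.tail_cons, Matrix.of_apply, Matrix.head_fin_const]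
      exact K.sub_mem (K.sub_mem K.one_mem (K.mul_mem hμK hrK)) hsK
    · show N 2 2 ∈ K
      rw [hNdef]; simp only [Matrix.cons_val', Matrix.cons_val_zero, Matrix.cons_val_one, Matrix.head_cons, Matrix.empty_val', Matrix.cons_val_fin_one, Matrix.cons_val_two, Matrix.tail_cons, Matrix.of_apply, Matrix.head_fin_const]
      exact hsK
  have mulK : ∀ (A B : Matrix (Fin 3) (Fin 3) ℂ), (∀ p q, A p q ∈ K) → (∀ p q, B p q ∈ K) →
      ∀ p q, (A * B) p q ∈ K := by
    intro A B hA hB p q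
    rw [Matrix.mul_apply]
    exact Subfield.sum_mem _ fun c _ => K.mul_mem (hA p c) (hB c q)
  have hN3 : (N ^ 3) i j ∈ K := by
    have h3 : N ^ 3 = N * N * N := by
      rw [pow_succ, pow_succ, pow_one]
    rw [h3]
    exact mulK _ _ (mulK _ _ hNK hNK) hNK i j
  rw [hMN, smul_pow]
  simp only [Matrix.smul_apply, smul_eq_mul]
  exact K.mul_mem ha₂3K hN3
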